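/- The SDP hierarchy values are monotone: for every POVM M and every q ≥ 2, H_{q+1}(M) ≤ H_q(M), where H_m(M) is the optimal value of the level-m feasibility/maximization problem; the proof constructs from a feasible family {R_{i_1...i_{q+1}}} at level q+1 the family R_{i_1...i_q} := (1/d) Σ_{i_{q+1}} Tr_{q+1} R_{i_1...i_{q+1}}, which is feasible at level q with the same visibility t. -/

import Mathlib

open Matrix BigOperators ComplexOrder

noncomputable section

/-- A POVM: positive semidefinite effects summing to the identity. -/
def IsPOVM (d n : ℕ) (M : Fin n → Matrix (Fin d) (Fin d) ℂ) : Prop :=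
  (∀ i, (M i).PosSemidef) ∧ ∑ i, M i = 1

/-- The depolarizing noise map `Φ_t(X) = t X + (1-t) (Tr X / d) I`. -/
def depol (d : ℕ) (t : ℝ) (X : Matrix (Fin d) (Fin d) ℂ) : Matrix (Fin d) (Fin d) ℂ :=
  (t : ℂ) • X + ((1 - t : ℝ) : ℂ) • ((X.trace / (d : ℂ)) • (1 : Matrix (Fin d) (Fin d) ℂ))

/-- Tensor product of `m` matrices, as a matrix on `(ℂ^d)^{⊗m}`. -/
def tensorPow (d m : ℕ) (Q : Fin m → Matrix (Fin d) (Fin d) ℂ) :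
    Matrix (Fin m → Fin d) (Fin m → Fin d) ℂ :=
  fun f g => ∏ a, Q a (f a) (g a)

/-- The permutation operator `V_σ` on `(ℂ^d)^{⊗m}`. -/
def permOp (m d : ℕ) (σ : Equiv.Perm (Fin m)) :
    Matrix (Fin m → Fin d) (Fin m → Fin d) ℂ :=
  fun f g => if f = g ∘ σ.symm then 1 else 0

/-- Partial trace over the tensor factor `b` of an `m`-partite matrix. -/
def ptraceAt (m d : ℕ) (b : Fin m)
    (M : Matrix (Fin m → Fin d) (Fin m → Fin d) ℂ) :
    Matrix ({a : Fin m // a ≠ b} → Fin d) ({a : Fin m // a ≠ b} → Fin d) ℂ :=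
  fun f g => ∑ k : Fin d,
    M (fun a => if h : a = b then k else f ⟨a, h⟩)
      (fun a => if h : a = b then k else g ⟨a, h⟩)

/-- Feasibility of visibility `t` at level `m` of the SDP hierarchy: there exist positive
semidefinite operators `R_{i₁…i_m}` with the correct marginals of `Φ_t(M)` in each slot
and vanishing swapped partial traces whenever the swapped indices differ. -/
def Feasible (d n m : ℕ) (M : Fin n → Matrix (Fin d) (Fin d) ℂ) (t : ℝ) : Prop :=
  ∃ R : (Fin m → Fin n) → Matrix (Fin m → Fin d) (Fin m → Fin d) ℂ,
    (∀ ι, (R ι).PosSemidef) ∧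
    (∀ (j : Fin m) (v : Fin n),
      ∑ ι ∈ Finset.univ.filter (fun ι : Fin m → Fin n => ι j = v), R ι =
        tensorPow d m (fun a => if a = j then depol d t (M v) else 1)) ∧
    (∀ (a b : Fin m) (ι : Fin m → Fin n), a ≠ b → ι a ≠ ι b →
      ptraceAt m d b (permOp m d (Equiv.swap a b) * R ι) = 0)

/-- The value `H_m(M)` of the level-`m` SDP. -/
def Hval (d n m : ℕ) (M : Fin n → Matrix (Fin d) (Fin d) ℂ) : ℝ :=
  sSup {t : ℝ | 0 ≤ t ∧ t ≤ 1 ∧ Feasible d n m M t}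

private lemma sum_snoc {β : Type*} [AddCommMonoid β] {α : Type*} [Fintype α] (q : ℕ)
    (φ : (Fin (q+1) → α) → β) :
    ∑ F : Fin (q+1) → α, φ F = ∑ f : Fin q → α, ∑ k : α, φ (Fin.snoc f k) := by
  have := (Fintype.sum_bijective (fun p : (Fin q → α) × α => (Fin.snoc p.1 p.2 : Fin (q+1) → α))
    ⟨fun p p' h => by
        have h1 := congrArg Fin.init h
        have h2 := congrArg (fun F : Fin (q+1) → α => F (Fin.last q)) h
        simp only [Fin.init_snoc, Fin.snoc_last] at h1 h2
        exact Prod.ext h1 h2,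
     fun F => ⟨(Fin.init F, F (Fin.last q)), Fin.snoc_init_self F⟩⟩
    (fun p => φ (Fin.snoc p.1 p.2)) φ (fun p => rfl))
  rw [← this, Fintype.sum_prod_type]

private lemma permOp_mul_apply (m d : ℕ) (σ : Equiv.Perm (Fin m))
    (X : Matrix (Fin m → Fin d) (Fin m → Fin d) ℂ) (f g : Fin m → Fin d) :
    (permOp m d σ * X) f g = X (f ∘ σ) g := by
  classical
  rw [Matrix.mul_apply, Finset.sum_eq_single (f ∘ ⇑σ)]
  · have hfe : f = (f ∘ ⇑σ) ∘ ⇑σ.symm := by funext x; simp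
    simp only [permOp]
    simp [← hfe]
  · intro h _ hne
    simp only [permOp]
    rw [if_neg, zero_mul]
    intro hEq
    apply hne
    funext x
    have := congrFun hEq (σ x)
    simp only [Function.comp_apply, Equiv.symm_apply_apply] at this
    exact this.symm
  · intro h; exact absurd (Finset.mem_univ _) h

private lemma swap_castSucc {q : ℕ} (a b y : Fin q) :
    Equiv.swap a.castSucc b.castSucc y.castSucc = (Equiv.swap a b y).castSucc := by
  rcases eq_or_ne y a with rfl | hya
  · simp
  rcases eq_or_ne y b with rfl | hyb
  · simp
  rw [Equiv.swap_apply_of_ne_of_ne hya hyb,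
    Equiv.swap_apply_of_ne_of_ne (fun h => hya (Fin.castSucc_inj.mp h))
      (fun h => hyb (Fin.castSucc_inj.mp h))]

private lemma swap_last {q : ℕ} (a b : Fin q) :
    Equiv.swap a.castSucc b.castSucc (Fin.last q) = Fin.last q :=
  Equiv.swap_apply_of_ne_of_ne (Fin.castSucc_lt_last a).ne' (Fin.castSucc_lt_last b).ne'

private lemma psd_zero {m : Type*} [Fintype m] : (0 : Matrix m m ℂ).PosSemidef :=
  ⟨Matrix.isHermitian_zero, fun x => by simp⟩

private lemma psd_sum {m κ : Type*} [Fintype m] (s : Finset κ) (f : κ → Matrix m m ℂ)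
    (h : ∀ i ∈ s, (f i).PosSemidef) : (∑ i ∈ s, f i).PosSemidef := by
  classical
  induction s using Finset.induction with
  | empty => simpa using psd_zero
  | @insert a s ha ih =>
    rw [Finset.sum_insert ha]
    exact (h a (Finset.mem_insert_self a s)).add (ih fun i hi => h i (Finset.mem_insert_of_mem hi))

private lemma psd_smul {m : Type*} [Fintype m] (c : ℝ) (hc : 0 ≤ c)
    (A : Matrix m m ℂ) (hA : A.PosSemidef) : (((c : ℝ) : ℂ) • A).PosSemidef := by
  refine posSemidef_iff_dotProduct_mulVec.mpr ⟨?_, ?_⟩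
  · have : star ((c : ℝ) : ℂ) = ((c : ℝ) : ℂ) := by
      simp [Complex.star_def, Complex.conj_ofReal]
    unfold Matrix.IsHermitian
    rw [Matrix.conjTranspose_smul, this, hA.1]
  · intro x
    rw [Matrix.smul_mulVec, dotProduct_smul, smul_eq_mul]
    have h1 : (0 : ℂ) ≤ ((c : ℝ) : ℂ) := by
      rw [Complex.le_def]
      simp [hc]
    exact mul_nonneg h1 (hA.dotProduct_mulVec_nonneg x)

private lemma block_psd (q d : ℕ) (A : Matrix (Fin (q+1) → Fin d) (Fin (q+1) → Fin d) ℂ)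
    (hA : A.PosSemidef) (k : Fin d) :
    Matrix.PosSemidef (Matrix.of fun f g : Fin q → Fin d => A (Fin.snoc f k) (Fin.snoc g k)) := by
  refine posSemidef_iff_dotProduct_mulVec.mpr ⟨?_, ?_⟩
  · show _ = _
    ext f g
    exact hA.1.apply _ _
  · intro x
    set y : (Fin (q+1) → Fin d) → ℂ := fun F => if F (Fin.last q) = k then x (Fin.init F) else 0 with hy
    have key : dotProduct (star x) ((Matrix.of fun f g : Fin q → Fin d =>
        A (Fin.snoc f k) (Fin.snoc g k)) *ᵥ x) = dotProduct (star y) (A *ᵥ y) := by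
      simp only [dotProduct, Matrix.mulVec, Pi.star_apply, Matrix.of_apply]
      rw [sum_snoc q (fun F => star (y F) * ∑ G, A F G * y G)]
      refine Finset.sum_congr rfl fun f _ => ?_
      rw [Finset.sum_eq_single k (fun l _ hl => by simp [hy, Fin.snoc_last, hl])
        (fun h => absurd (Finset.mem_univ k) h)]
      have hstar : star (x f) = star (y (Fin.snoc f k)) := by
        simp [hy, Fin.snoc_last, Fin.init_snoc]
      rw [← hstar]
      congr 1
      rw [sum_snoc q (fun G => A (Fin.snoc f k) G * y G)]
      refine Finset.sum_congr rfl fun g _ => ?_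
      rw [Finset.sum_eq_single k (fun l _ hl => by simp [hy, Fin.snoc_last, hl])
        (fun h => absurd (Finset.mem_univ k) h)]
      simp [hy, Fin.snoc_last, Fin.init_snoc]
    rw [key]
    exact hA.dotProduct_mulVec_nonneg y

private def ext1 {q d : ℕ} (b : Fin q) (f' : {x : Fin q // x ≠ b} → Fin d) (l : Fin d) :
    {x : Fin (q+1) // x ≠ b.castSucc} → Fin d :=
  fun x => if hx : x.1 = Fin.last q then l
    else f' ⟨x.1.castPred hx, fun hc => x.2 (by rw [← Fin.castSucc_castPred x.1 hx, hc])⟩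

private lemma insA {q d : ℕ} (b : Fin q) (f' : {x : Fin q // x ≠ b} → Fin d) (l k : Fin d) :
    (fun x : Fin (q+1) => if h : x = b.castSucc then k else ext1 b f' l ⟨x, h⟩)
      = Fin.snoc (fun x : Fin q => if h : x = b then k else f' ⟨x, h⟩) l := by
  funext x
  refine Fin.lastCases ?_ (fun y => ?_) x
  · rw [dif_neg (Fin.castSucc_lt_last b).ne', Fin.snoc_last]
    simp [ext1]
  · rw [Fin.snoc_castSucc]
    by_cases hyb : y = b
    · subst hyb; rw [dif_pos rfl, dif_pos rfl]
    · rw [dif_neg (fun hc => hyb (Fin.castSucc_inj.mp hc)), dif_neg hyb]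
      simp only [ext1]
      rw [dif_neg (Fin.castSucc_lt_last y).ne]
      exact congrArg f' (Subtype.ext (by simp [Fin.castPred_castSucc]))

private lemma snoc_comp_swap {q d : ℕ} (a b : Fin q) (u : Fin q → Fin d) (l : Fin d) :
    ((Fin.snoc u l : Fin (q+1) → Fin d) ∘ (Equiv.swap a.castSucc b.castSucc))
      = Fin.snoc (u ∘ (Equiv.swap a b)) l := by
  funext x
  refine Fin.lastCases ?_ (fun y => ?_) x
  · rw [Function.comp_apply, swap_last, Fin.snoc_last, Fin.snoc_last]
  · rw [Function.comp_apply, swap_castSucc, Fin.snoc_castSucc, Fin.snoc_castSucc,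
      Function.comp_apply]

private lemma feasible_step (d n q : ℕ) (hd : d ≠ 0)
    (M : Fin n → Matrix (Fin d) (Fin d) ℂ) (t : ℝ)
    (h : Feasible d n (q+1) M t) : Feasible d n q M t := by
  classical
  obtain ⟨R, hPSD, hMarg, hSwap⟩ := h
  set R' : (Fin q → Fin n) → Matrix (Fin q → Fin d) (Fin q → Fin d) ℂ :=
    fun ι => (((d : ℝ)⁻¹ : ℝ) : ℂ) • ∑ w : Fin n, ∑ k : Fin d,
      Matrix.of (fun f g : Fin q → Fin d =>
        R (Fin.snoc ι w) (Fin.snoc f k) (Fin.snoc g k)) with hR'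
  have entry : ∀ ι f g, R' ι f g
      = (((d : ℝ)⁻¹ : ℝ) : ℂ) * ∑ w : Fin n, ∑ k : Fin d,
        R (Fin.snoc ι w) (Fin.snoc f k) (Fin.snoc g k) := by
    intro ι f g
    simp only [hR', Matrix.smul_apply, Matrix.sum_apply, Matrix.of_apply, smul_eq_mul]
  refine ⟨R', ?_, ?_, ?_⟩
  · intro ι
    exact psd_smul _ (by positivity) _ (psd_sum _ _ fun w _ => psd_sum _ _ fun k _ =>
      block_psd q d _ (hPSD _) k)
  · intro j v
    ext f g
    rw [Matrix.sum_apply]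
    have e1 : ∑ ι ∈ Finset.univ.filter (fun ι : Fin q → Fin n => ι j = v), R' ι f g
        = (((d : ℝ)⁻¹ : ℝ) : ℂ) * ∑ k : Fin d, ∑ ι : Fin q → Fin n, ∑ w : Fin n,
            (if ι j = v then R (Fin.snoc ι w) (Fin.snoc f k) (Fin.snoc g k) else 0) := by
      simp only [entry]
      rw [← Finset.mul_sum]
      congr 1
      rw [Finset.sum_filter]
      rw [show ∑ ι : Fin q → Fin n, (if ι j = v then ∑ w : Fin n, ∑ k : Fin d,
            R (Fin.snoc ι w) (Fin.snoc f k) (Fin.snoc g k) else 0)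
          = ∑ ι : Fin q → Fin n, ∑ k : Fin d, ∑ w : Fin n,
            (if ι j = v then R (Fin.snoc ι w) (Fin.snoc f k) (Fin.snoc g k) else 0) from
        Finset.sum_congr rfl fun ι _ => by
          by_cases hc : ι j = v
          · simp only [hc, if_true]; rw [Finset.sum_comm]
          · simp [hc]]
      exact Finset.sum_comm
    have e2 : ∀ k : Fin d, (∑ ι : Fin q → Fin n, ∑ w : Fin n,
        (if ι j = v then R (Fin.snoc ι w) (Fin.snoc f k) (Fin.snoc g k) else 0))
        = tensorPow d (q+1) (fun a => if a = j.castSucc then depol d t (M v) else 1)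
            (Fin.snoc f k) (Fin.snoc g k) := by
      intro k
      have hm' := congrFun (congrFun (hMarg j.castSucc v) (Fin.snoc f k)) (Fin.snoc g k)
      rw [Matrix.sum_apply, Finset.sum_filter] at hm'
      rw [← hm', sum_snoc q (fun κ : Fin (q+1) → Fin n =>
        if κ j.castSucc = v then R κ (Fin.snoc f k) (Fin.snoc g k) else 0)]
      refine Finset.sum_congr rfl fun ι _ => Finset.sum_congr rfl fun w _ => ?_
      rw [Fin.snoc_castSucc]
    have e3 : ∀ k : Fin d, tensorPow d (q+1)
        (fun a => if a = j.castSucc then depol d t (M v) else 1)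
          (Fin.snoc f k) (Fin.snoc g k)
        = tensorPow d q (fun a => if a = j then depol d t (M v) else 1) f g := by
      intro k
      simp only [tensorPow]
      rw [Fin.prod_univ_castSucc]
      simp only [Fin.snoc_castSucc, Fin.snoc_last]
      rw [if_neg (Fin.castSucc_lt_last j).ne', Matrix.one_apply_eq, mul_one]
      refine Finset.prod_congr rfl fun a _ => ?_
      by_cases ha : a = j
      · simp [ha]
      · rw [if_neg (fun hc => ha (Fin.castSucc_inj.mp hc)), if_neg ha]
    rw [e1]
    rw [Finset.sum_congr rfl fun k _ => (e2 k).trans (e3 k)]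
    rw [Finset.sum_const, Finset.card_univ, Fintype.card_fin, nsmul_eq_mul, ← mul_assoc]
    have hcancel : (((d : ℝ)⁻¹ : ℝ) : ℂ) * ((d : ℕ) : ℂ) = 1 := by
      push_cast
      field_simp
    rw [hcancel, one_mul]
  · intro a b ι hab hι
    ext f' g'
    simp only [ptraceAt, permOp_mul_apply, Matrix.zero_apply]
    simp only [entry]
    rw [← Finset.mul_sum]
    have hz : ∀ (w : Fin n) (l : Fin d), ∑ k : Fin d,
        R (Fin.snoc ι w)
          (Fin.snoc ((fun x : Fin q => if h : x = b then k else f' ⟨x, h⟩) ∘ ⇑(Equiv.swap a b)) l)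
          (Fin.snoc (fun x : Fin q => if h : x = b then k else g' ⟨x, h⟩) l) = 0 := by
      intro w l
      have hne : a.castSucc ≠ b.castSucc := fun hc => hab (Fin.castSucc_inj.mp hc)
      have hne2 : (Fin.snoc ι w : Fin (q+1) → Fin n) a.castSucc ≠ (Fin.snoc ι w : Fin (q+1) → Fin n) b.castSucc := by
        rw [Fin.snoc_castSucc, Fin.snoc_castSucc]; exact hι
      have h0 := congrFun (congrFun (hSwap a.castSucc b.castSucc (Fin.snoc ι w) hne hne2)
        (ext1 b f' l)) (ext1 b g' l)
      simp only [ptraceAt, permOp_mul_apply, Matrix.zero_apply] at h0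
      simp only [insA, snoc_comp_swap] at h0
      exact h0
    have hmain : ∑ k : Fin d, ∑ w : Fin n, ∑ l : Fin d,
        R (Fin.snoc ι w)
          (Fin.snoc ((fun x : Fin q => if h : x = b then k else f' ⟨x, h⟩) ∘ ⇑(Equiv.swap a b)) l)
          (Fin.snoc (fun x : Fin q => if h : x = b then k else g' ⟨x, h⟩) l) = 0 := by
      rw [Finset.sum_comm]
      refine Finset.sum_eq_zero fun w _ => ?_
      rw [Finset.sum_comm]
      exact Finset.sum_eq_zero fun l _ => hz w l
    rw [hmain, mul_zero]

private lemma feasible_trivial (d n q : ℕ) (hd : d = 0) (hq : 0 < q)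
    (M : Fin n → Matrix (Fin d) (Fin d) ℂ) (t : ℝ) : Feasible d n q M t := by
  subst hd
  refine ⟨0, fun ι => psd_zero, ?_, ?_⟩
  · intro j v
    ext f g
    exact (f ⟨0, hq⟩).elim0
  · intro a b ι hab hι
    ext f g
    simp [ptraceAt, Matrix.mul_zero]

/-- Monotonicity of the hierarchy: higher levels yield better (smaller) bounds;
`H_{q+1}(M) ≤ H_q(M)`. -/
theorem hierarchy_monotone (d n q : ℕ) (hq : 2 ≤ q)
    (M : Fin n → Matrix (Fin d) (Fin d) ℂ) (hM : IsPOVM d n M) :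
    Hval d n (q + 1) M ≤ Hval d n q M := by
  have hsub : {t : ℝ | 0 ≤ t ∧ t ≤ 1 ∧ Feasible d n (q+1) M t}
      ⊆ {t : ℝ | 0 ≤ t ∧ t ≤ 1 ∧ Feasible d n q M t} := by
    rintro t ⟨h0, h1, hf⟩
    refine ⟨h0, h1, ?_⟩
    rcases Nat.eq_zero_or_pos d with hd | hd
    · exact feasible_trivial d n q hd (by omega) M t
    · exact feasible_step d n q hd.ne' M t hf
  have hbdd : BddAbove {t : ℝ | 0 ≤ t ∧ t ≤ 1 ∧ Feasible d n q M t} :=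
    ⟨1, fun t ht => ht.2.1⟩
  rcases Set.eq_empty_or_nonempty {t : ℝ | 0 ≤ t ∧ t ≤ 1 ∧ Feasible d n (q+1) M t} with hA | hA
  · rw [Hval, hA, Real.sSup_empty, Hval]
    rcases Set.eq_empty_or_nonempty {t : ℝ | 0 ≤ t ∧ t ≤ 1 ∧ Feasible d n q M t} with hB | hB
    · rw [hB, Real.sSup_empty]
    · obtain ⟨t, ht⟩ := hB
      exact le_trans ht.1 (le_csSup hbdd ht)
  · exact csSup_le_csSup hbdd hA hsub
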